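/- Every half-graph of height n ≥ 3 (vertices v_1,…,v_n, u_1,…,u_n, edges v_i u_j for i ≤ j) has the property that deleting any single vertex yields a graph that is not prime, i.e., the half-graph contains no prime induced subgraph on 2n−1 vertices. -/

import Mathlib

/-- A homogeneous set of a finite simple graph: a set `X` of vertices with
`2 ≤ |X| < |V|` such that every vertex outside `X` is complete or anticomplete to `X`. -/
def IsHomogeneousSet {V : Type*} [Fintype V] (G : SimpleGraph V) (X : Finset V) : Prop :=
  2 ≤ X.card ∧ X.card < Fintype.card V ∧
    ∀ v ∉ X, (∀ x ∈ X, G.Adj v x) ∨ (∀ x ∈ X, ¬ G.Adj v x)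

/-- A graph is prime if it has no homogeneous set. -/
def IsPrimeGraph {V : Type*} [Fintype V] (G : SimpleGraph V) : Prop :=
  ¬ ∃ X : Finset V, IsHomogeneousSet G X

/-- The 1-subdivision of the star `K_{1,n}`: center `none`, subdivision vertices
`some (inl i)`, leaves `some (inr i)`. -/
def subdivStar (n : ℕ) : SimpleGraph (Option (Fin n ⊕ Fin n)) :=
  SimpleGraph.fromRel fun a b =>
    match a, b with
    | none, some (Sum.inl _) => True
    | some (Sum.inl i), some (Sum.inr j) => i = j
    | _, _ => False

/-- The line graph of `K_{2,n}`: vertices are the edges `(a, j)` of `K_{2,n}`,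
adjacent iff they share an endpoint. -/
def lineK2 (n : ℕ) : SimpleGraph (Fin 2 × Fin n) :=
  SimpleGraph.fromRel fun a b => a.1 = b.1 ∨ a.2 = b.2

/-- The thin spider with `n` legs: vertices `v_i = inl i`, `u_i = inr i`;
edges `v_i u_i` and `u_i u_j` for `i ≠ j`. -/
def thinSpider (n : ℕ) : SimpleGraph (Fin n ⊕ Fin n) :=
  SimpleGraph.fromRel fun a b =>
    match a, b with
    | Sum.inl i, Sum.inr j => i = j
    | Sum.inr _, Sum.inr _ => True
    | _, _ => False

/-- The half-graph of height `n`: vertices `v_i = inl i`, `u_j = inr j`;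
edges `v_i u_j` for `i ≤ j`. -/
def halfGraph (n : ℕ) : SimpleGraph (Fin n ⊕ Fin n) :=
  SimpleGraph.fromRel fun a b =>
    match a, b with
    | Sum.inl i, Sum.inr j => i ≤ j
    | _, _ => False

/-- The graph `H'_{n,I}`: apex `w = none` adjacent to all `v_i`, plus
edges `v_i u_j` for `i ≤ j` and all `u_i u_j`. -/
def HPrimeG (n : ℕ) : SimpleGraph (Option (Fin n ⊕ Fin n)) :=
  SimpleGraph.fromRel fun a b =>
    match a, b with
    | none, some (Sum.inl _) => True
    | some (Sum.inl i), some (Sum.inr j) => i ≤ j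
    | some (Sum.inr _), some (Sum.inr _) => True
    | _, _ => False

/-- The graph `H*_n`: apex `w = none` adjacent only to `v_1`, plus
edges `v_i u_j` for `i ≤ j` and all `u_i u_j`. -/
def HStarG (n : ℕ) : SimpleGraph (Option (Fin n ⊕ Fin n)) :=
  SimpleGraph.fromRel fun a b =>
    match a, b with
    | none, some (Sum.inl i) => (i : ℕ) = 0
    | some (Sum.inl i), some (Sum.inr j) => i ≤ j
    | some (Sum.inr _), some (Sum.inr _) => True
    | _, _ => False

lemma not_prime_of_twins {V : Type*} [Fintype V] [DecidableEq V] {G : SimpleGraph V}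
    {a b : V} (hab : a ≠ b) (h3 : 3 ≤ Fintype.card V)
    (h : ∀ v, v ≠ a → v ≠ b → (G.Adj v a ↔ G.Adj v b)) : ¬ IsPrimeGraph G := by
  intro hp
  refine hp ⟨{a, b}, ?_, ?_, ?_⟩
  · rw [Finset.card_pair hab]
  · rw [Finset.card_pair hab]; omega
  · intro v hv
    simp only [Finset.mem_insert, Finset.mem_singleton, not_or] at hv
    by_cases hva : G.Adj v a
    · left
      intro x hx
      simp only [Finset.mem_insert, Finset.mem_singleton] at hx
      rcases hx with rfl | rfl
      · exact hva
      · exact (h v hv.1 hv.2).mp hva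
    · right
      intro x hx hadj
      simp only [Finset.mem_insert, Finset.mem_singleton] at hx
      rcases hx with rfl | rfl
      · exact hva hadj
      · exact hva ((h v hv.1 hv.2).mpr hadj)

lemma not_prime_of_isolated {V : Type*} [Fintype V] [DecidableEq V] {G : SimpleGraph V}
    (a : V) (h3 : 3 ≤ Fintype.card V) (h : ∀ b, ¬ G.Adj a b) : ¬ IsPrimeGraph G := by
  intro hp
  refine hp ⟨Finset.univ.erase a, ?_, ?_, ?_⟩
  · rw [Finset.card_erase_of_mem (Finset.mem_univ a), Finset.card_univ]; omega
  · rw [Finset.card_erase_of_mem (Finset.mem_univ a), Finset.card_univ]; omega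
  · intro v hv
    right
    intro x _ hadj
    have hva : v = a := by
      by_contra hne
      exact hv (Finset.mem_erase.mpr ⟨hne, Finset.mem_univ v⟩)
    subst hva
    exact h x hadj

lemma isPrimeGraph_congr {V : Type*} (G : SimpleGraph V) (inst1 inst2 : Fintype V) :
    @IsPrimeGraph V inst1 G ↔ @IsPrimeGraph V inst2 G := by
  rw [Subsingleton.elim inst1 inst2]

lemma induce_prime_congr {V : Type*} (G : SimpleGraph V) (s t : Set V)
    [Fintype ↥s] [Fintype ↥t] (h : s = t) :
    IsPrimeGraph (G.induce s) ↔ IsPrimeGraph (G.induce t) := by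
  subst h
  exact isPrimeGraph_congr _ _ _

/-- For `n ≥ 3`, deleting any single vertex from the half-graph of height `n` yields
a non-prime graph; equivalently, the half-graph contains no prime induced subgraph
on `2n-1` vertices. -/
theorem halfGraph_delete_not_prime (n : ℕ) (hn : 3 ≤ n) :
    (∀ x : Fin n ⊕ Fin n, ¬ IsPrimeGraph ((halfGraph n).induce {y | y ≠ x})) ∧
    (∀ s : Finset (Fin n ⊕ Fin n), s.card = 2 * n - 1 →
      ¬ IsPrimeGraph ((halfGraph n).induce ↑s)) := by
  have hcard : ∀ x : Fin n ⊕ Fin n, 3 ≤ Fintype.card ↥{y | y ≠ x} := by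
    intro x
    have : Fintype.card ↥{y | y ≠ x} = 2 * n - 1 := by
      rw [Set.card_ne_eq]; simp; omega
    omega
  have part1 : ∀ x : Fin n ⊕ Fin n, ¬ IsPrimeGraph ((halfGraph n).induce {y | y ≠ x}) := by
    intro x
    rcases x with ⟨i, hi⟩ | ⟨j, hj⟩
    · -- delete v_i
      rcases Nat.eq_zero_or_pos i with h0 | h1
      · -- u_0 is isolated
        subst h0
        refine not_prime_of_isolated (⟨Sum.inr ⟨0, by omega⟩, by simp⟩ : ↥{y : Fin n ⊕ Fin n | y ≠ Sum.inl ⟨0, hi⟩}) (hcard _) ?_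
        rintro ⟨b, hb⟩ hadj
        rcases b with ⟨k, hk⟩ | ⟨k, hk⟩
        · have hne : k ≠ 0 := by
            intro h; apply hb
            simp [Fin.ext_iff, h]
          simp [halfGraph, Fin.mk_le_mk] at hadj
          omega
        · simp [halfGraph] at hadj
      · -- u_{i-1} and u_i are twins
        refine not_prime_of_twins (a := ⟨Sum.inr ⟨i - 1, by omega⟩, by simp⟩)
          (b := ⟨Sum.inr ⟨i, hi⟩, by simp⟩) ?_ (hcard _) ?_
        · simp [Subtype.ext_iff, Fin.ext_iff]; omega
        · rintro ⟨v, hv⟩ hva hvb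
          rcases v with ⟨k, hk⟩ | ⟨k, hk⟩
          · have hne : k ≠ i := by
              intro h; apply hv; simp [Fin.ext_iff, h]
            simp [halfGraph, Fin.mk_le_mk]
            omega
          · simp [halfGraph]
    · -- delete u_j
      rcases Nat.lt_or_ge (j + 1) n with h1 | h2
      · -- v_j and v_{j+1} are twins
        refine not_prime_of_twins (a := ⟨Sum.inl ⟨j, hj⟩, by simp⟩)
          (b := ⟨Sum.inl ⟨j + 1, h1⟩, by simp⟩) ?_ (hcard _) ?_
        · simp [Subtype.ext_iff, Fin.ext_iff]
        · rintro ⟨v, hv⟩ hva hvb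
          rcases v with ⟨k, hk⟩ | ⟨k, hk⟩
          · simp [halfGraph]
          · have hne : k ≠ j := by
              intro h; apply hv; simp [Fin.ext_iff, h]
            simp [halfGraph, Fin.mk_le_mk]
            omega
      · -- j = n - 1, v_{n-1} is isolated
        have hjn : j = n - 1 := by omega
        refine not_prime_of_isolated (⟨Sum.inl ⟨n - 1, by omega⟩, by simp⟩ : ↥{y : Fin n ⊕ Fin n | y ≠ Sum.inr ⟨j, hj⟩}) (hcard _) ?_
        rintro ⟨b, hb⟩ hadj
        rcases b with ⟨k, hk⟩ | ⟨k, hk⟩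
        · simp [halfGraph] at hadj
        · have hne : k ≠ j := by
            intro h; apply hb; simp [Fin.ext_iff, h]
          simp [halfGraph, Fin.mk_le_mk] at hadj
          omega
  refine ⟨part1, ?_⟩
  intro s hs
  have hc : sᶜ.card = 1 := by
    rw [Finset.card_compl]
    simp only [Fintype.card_sum, Fintype.card_fin]
    omega
  obtain ⟨x, hx⟩ := Finset.card_eq_one.mp hc
  have hseq : (↑s : Set (Fin n ⊕ Fin n)) = {y | y ≠ x} := by
    have : s = {x}ᶜ := by rw [← hx, compl_compl]
    rw [this]
    ext y
    simp
  rw [induce_prime_congr (halfGraph n) _ _ hseq]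
  exact part1 x
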